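/- arXiv:2410.23610 — 2 statements merged into one kernel-verified Lean document; each statement's English description precedes it below -/
import Mathlib

section
/- Let g : ℝ^{D×(N+1)} × ℝ^p → ℝ^{D×(N+1)} be differentiable and satisfy (G1) and (G3). Let (ρ_t)_{t∈[0,1]} be a family of finite nonnegative Borel measures on ℝ^p, each supported in the closed ball {β : ‖β‖ ≤ r}, with ρ_t(ℝ^p) ≤ C_m for all t, and C_ρ-Lipschitz in the bounded-Lipschitz norm. Then for every H ∈ ℝ^{D×(N+1)} there exists a unique continuously differentiable T(H,·) : [0,1] → ℝ^{D×(N+1)} with T(H,0) = H and d/dt T(H,t) = ∫_{ℝ^p} g(T(H,t),β) dρ_t(β) for all t ∈ [0,1]; moreover, for every B > 0 the map (H,t) ↦ T(H,t) is Lipschitz continuous on {H : ‖H‖_{2,col} ≤ B} × [0,1]. -/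
open MeasureTheory Set

noncomputable section

/-- `D × (N+1)` real matrices, with the Frobenius (Euclidean) norm. -/
abbrev Mat (D N : ℕ) : Type := EuclideanSpace ℝ (Fin D × Fin (N + 1))

/-- Parameter space `ℝ^p` with the Euclidean norm. -/
abbrev Par (p : ℕ) : Type := EuclideanSpace ℝ (Fin p)

/-- The `j`-th column of a matrix, as a Euclidean vector. -/
noncomputable def matCol {D N : ℕ} (Z : Mat D N) (j : Fin (N + 1)) :
    EuclideanSpace ℝ (Fin D) :=
  (WithLp.equiv 2 (Fin D → ℝ)).symm fun i => Z (i, j)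

/-- Maximum ℓ²-norm of a column: `‖Z‖_{2,col}`. -/
noncomputable def colNorm {D N : ℕ} (Z : Mat D N) : ℝ :=
  ⨆ j : Fin (N + 1), ‖matCol Z j‖

/-- A family of measures `(ρ_t)` is `Cρ`-Lipschitz in the bounded-Lipschitz norm on `[0,1]`. -/
def BLLipschitz {α : Type*} [PseudoMetricSpace α] [MeasurableSpace α]
    (ρ : ℝ → Measure α) (Cρ : ℝ) : Prop :=
  ∀ φ : α → ℝ, (∀ x, |φ x| ≤ 1) → LipschitzWith 1 φ →
    ∀ s ∈ Icc (0 : ℝ) 1, ∀ t ∈ Icc (0 : ℝ) 1,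
      |(∫ x, φ x ∂(ρ t)) - ∫ x, φ x ∂(ρ s)| ≤ Cρ * |t - s|

variable {D N : ℕ}

lemma colNorm_nonneg (Z : Mat D N) : 0 ≤ colNorm Z :=
  Real.iSup_nonneg fun _ => norm_nonneg _

lemma matCol_norm (Z : Mat D N) (j : Fin (N+1)) :
    ‖matCol Z j‖ = Real.sqrt (∑ i : Fin D, ‖Z (i, j)‖ ^ 2) := by
  rw [EuclideanSpace.norm_eq]
  rfl

lemma norm_matCol_le_colNorm (Z : Mat D N) (j : Fin (N+1)) : ‖matCol Z j‖ ≤ colNorm Z :=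
  le_ciSup (f := fun j' => ‖matCol Z j'‖) (Set.Finite.bddAbove (Set.finite_range _)) j

lemma colNorm_le_norm (Z : Mat D N) : colNorm Z ≤ ‖Z‖ := by
  refine ciSup_le fun j => ?_
  rw [matCol_norm, EuclideanSpace.norm_eq]
  apply Real.sqrt_le_sqrt
  rw [Fintype.sum_prod_type_right]
  refine Finset.single_le_sum (f := fun j' => ∑ i : Fin D, ‖Z (i, j')‖ ^ 2)
    (fun _ _ => Finset.sum_nonneg fun _ _ => sq_nonneg _) (Finset.mem_univ j)

lemma norm_le_sqrt_mul_colNorm (Z : Mat D N) :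
    ‖Z‖ ≤ Real.sqrt (N + 1) * colNorm Z := by
  rw [EuclideanSpace.norm_eq]
  have h1 : ∑ q : Fin D × Fin (N+1), ‖Z q‖ ^ 2 ≤ (N + 1 : ℝ) * colNorm Z ^ 2 := by
    rw [Fintype.sum_prod_type_right]
    have h2 : ∀ j : Fin (N+1), ∑ i : Fin D, ‖Z (i, j)‖ ^ 2 ≤ colNorm Z ^ 2 := by
      intro j
      have h3 : ‖matCol Z j‖ ^ 2 = ∑ i : Fin D, ‖Z (i, j)‖ ^ 2 := by
        rw [matCol_norm, Real.sq_sqrt (Finset.sum_nonneg fun _ _ => sq_nonneg _)]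
      rw [← h3]
      exact pow_le_pow_left₀ (norm_nonneg _) (norm_matCol_le_colNorm Z j) 2
    calc ∑ j, ∑ i : Fin D, ‖Z (i, j)‖ ^ 2 ≤ ∑ _j : Fin (N+1), colNorm Z ^ 2 :=
          Finset.sum_le_sum fun j _ => h2 j
      _ = (N + 1 : ℝ) * colNorm Z ^ 2 := by
          rw [Finset.sum_const, Finset.card_univ, Fintype.card_fin, nsmul_eq_mul]
          push_cast; ring
  calc Real.sqrt (∑ q : Fin D × Fin (N+1), ‖Z q‖ ^ 2)
      ≤ Real.sqrt ((N + 1 : ℝ) * colNorm Z ^ 2) := Real.sqrt_le_sqrt h1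
    _ = Real.sqrt (N + 1) * colNorm Z := by
        rw [Real.sqrt_mul (by positivity), Real.sqrt_sq (colNorm_nonneg Z)]

section ret
variable {E : Type*} [NormedAddCommGroup E] [NormedSpace ℝ E]

/-- radial retraction onto the closed ball of radius `R`. -/
def ret (R : ℝ) (x : E) : E := (R / max R ‖x‖) • x

lemma ret_eq_self {R : ℝ} (hR : 0 < R) {x : E} (h : ‖x‖ ≤ R) : ret R x = x := by
  rw [ret, max_eq_left h, div_self hR.ne', one_smul]

lemma norm_ret_le_self {R : ℝ} (hR : 0 < R) (x : E) : ‖ret R x‖ ≤ ‖x‖ := by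
  rw [ret, norm_smul, Real.norm_eq_abs, abs_of_nonneg (by positivity)]
  have h1 : R / max R ‖x‖ ≤ 1 := by
    rw [div_le_one (lt_max_of_lt_left hR)]; exact le_max_left _ _
  nlinarith [norm_nonneg x]

lemma norm_ret_le {R : ℝ} (hR : 0 < R) (x : E) : ‖ret R x‖ ≤ R := by
  rw [ret, norm_smul, Real.norm_eq_abs, abs_of_nonneg (by positivity)]
  rw [div_mul_eq_mul_div, div_le_iff₀ (lt_max_of_lt_left hR)]
  have := le_max_right R ‖x‖
  nlinarith

lemma ret_lip {R : ℝ} (hR : 0 < R) (x y : E) : ‖ret R x - ret R y‖ ≤ 2 * ‖x - y‖ := by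
  set mx := max R ‖x‖ with hmx
  set my := max R ‖y‖ with hmy
  have hmx0 : 0 < mx := lt_max_of_lt_left hR
  have hmy0 : 0 < my := lt_max_of_lt_left hR
  have key : ret R x - ret R y = (R / mx) • (x - y) + ((R / mx) - (R / my)) • y := by
    rw [ret, ret, smul_sub, sub_smul]; abel
  have hd : |mx - my| ≤ ‖x - y‖ := by
    rw [hmx, hmy, max_comm R ‖x‖, max_comm R ‖y‖]
    exact le_trans (abs_max_sub_max_le_abs _ _ _) (abs_norm_sub_norm_le x y)
  have h1 : R / mx ≤ 1 := by rw [div_le_one hmx0]; exact le_max_left _ _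
  have h2 : ‖((R / mx) - (R / my)) • y‖ ≤ ‖x - y‖ := by
    rw [norm_smul, Real.norm_eq_abs]
    have he : R / mx - R / my = R * (my - mx) / (mx * my) := by field_simp
    rw [he, abs_div, abs_mul, abs_of_pos hR, abs_of_pos (mul_pos hmx0 hmy0)]
    rw [div_mul_eq_mul_div, div_le_iff₀ (mul_pos hmx0 hmy0)]
    have hy : ‖y‖ ≤ my := le_max_right _ _
    have h3 : |my - mx| ≤ ‖x - y‖ := by rw [abs_sub_comm]; exact hd
    have hR' : R ≤ mx := le_max_left _ _
    calc R * |my - mx| * ‖y‖ ≤ mx * ‖x - y‖ * my := by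
          apply mul_le_mul (mul_le_mul hR' h3 (abs_nonneg _) hmx0.le) hy (norm_nonneg _)
          positivity
      _ = ‖x - y‖ * (mx * my) := by ring
  calc ‖ret R x - ret R y‖ ≤ ‖(R / mx) • (x - y)‖ + ‖((R / mx) - (R / my)) • y‖ := by
        rw [key]; exact norm_add_le _ _
    _ ≤ ‖x - y‖ + ‖x - y‖ := by
        refine add_le_add ?_ h2
        rw [norm_smul, Real.norm_eq_abs, abs_of_nonneg (by positivity)]
        nlinarith [norm_nonneg (x - y)]
    _ = 2 * ‖x - y‖ := by ring

lemma mem_ret {R : ℝ} (hR : 0 < R) (x : E) : ret R x ∈ Metric.closedBall (0 : E) R := by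
  rw [Metric.mem_closedBall, dist_zero_right]; exact norm_ret_le hR x

end ret

section approx
variable {p : ℕ}

lemma exists_lip_approx (f : Par p → ℝ) (hf : Continuous f) {C r : ℝ} (hC : 0 < C)
    (hfb : ∀ β, |f β| ≤ C) (hr : 0 < r) {ε : ℝ} (hε : 0 < ε) :
    ∃ (φ : Par p → ℝ) (L : ℝ), 0 < L ∧ (∀ β, |φ β| ≤ C) ∧
      (∀ β γ : Par p, |φ β - φ γ| ≤ L * dist β γ) ∧
      (∀ β : Par p, ‖β‖ ≤ r → |f β - φ β| ≤ ε) := by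
  -- uniform continuity on a compact ball
  have hcomp : IsCompact (Metric.closedBall (0 : Par p) (r + 2)) :=
    isCompact_closedBall _ _
  have huc := hcomp.uniformContinuousOn_of_continuous hf.continuousOn
  rw [Metric.uniformContinuousOn_iff] at huc
  obtain ⟨δ₀, hδ₀, hδ⟩ := huc ε hε
  set δ : ℝ := min δ₀ 1 with hδdef
  have hδpos : 0 < δ := lt_min hδ₀ one_pos
  have hδ1 : δ ≤ 1 := min_le_right _ _
  set L : ℝ := 2 * C / δ with hLdef
  have hL : 0 < L := by positivity
  set φ : Par p → ℝ := fun β => ⨅ y : Par p, (f y + L * dist β y) with hφdef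
  have hbdd : ∀ β : Par p, BddBelow (Set.range fun y => f y + L * dist β y) := by
    intro β
    refine ⟨-C, ?_⟩
    rintro _ ⟨y, rfl⟩
    show -C ≤ f y + L * dist β y
    have := hfb y
    have := dist_nonneg (x := β) (y := y)
    have := abs_le.mp (hfb y)
    nlinarith
  have hφle : ∀ β, φ β ≤ f β := by
    intro β
    have := ciInf_le (hbdd β) β
    simpa using this
  have hφge : ∀ β, -C ≤ φ β := by
    intro β
    refine le_ciInf fun y => ?_
    show -C ≤ f y + L * dist β y
    have := abs_le.mp (hfb y)
    have := dist_nonneg (x := β) (y := y)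
    nlinarith
  have hφb : ∀ β, |φ β| ≤ C := fun β =>
    abs_le.mpr ⟨hφge β, le_trans (hφle β) (abs_le.mp (hfb β)).2⟩
  have hlip1 : ∀ β γ : Par p, φ β ≤ φ γ + L * dist β γ := by
    intro β γ
    rw [← sub_le_iff_le_add]
    refine le_ciInf fun y => ?_
    show φ β - L * dist β γ ≤ f y + L * dist γ y
    have h1 : φ β ≤ f y + L * dist β y := ciInf_le (hbdd β) y
    have h2 : dist β y ≤ dist β γ + dist γ y := dist_triangle β γ y
    nlinarith
  have hlip : ∀ β γ : Par p, |φ β - φ γ| ≤ L * dist β γ := by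
    intro β γ
    rw [abs_sub_le_iff]
    constructor
    · have := hlip1 β γ; linarith
    · have := hlip1 γ β; rw [dist_comm γ β] at this; linarith
  refine ⟨φ, L, hL, hφb, hlip, fun β hβ => ?_⟩
  have hlow : f β - ε ≤ φ β := by
    refine le_ciInf fun y => ?_
    show f β - ε ≤ f y + L * dist β y
    by_cases hcase : dist β y < δ
    · have hβmem : β ∈ Metric.closedBall (0 : Par p) (r + 2) := by
        rw [Metric.mem_closedBall, dist_zero_right]; linarith
      have hymem : y ∈ Metric.closedBall (0 : Par p) (r + 2) := by
        rw [Metric.mem_closedBall, dist_zero_right]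
        have : dist y β ≤ δ := by rw [dist_comm]; exact hcase.le
        have h4 : ‖y‖ ≤ ‖β‖ + dist y β := by
          have := norm_sub_norm_le y β
          rw [← dist_eq_norm] at this; linarith
        linarith
      have := hδ β hβmem y hymem (lt_of_lt_of_le hcase (min_le_left _ _))
      rw [Real.dist_eq] at this
      have := abs_le.mp this.le
      have := mul_nonneg hL.le (dist_nonneg (x := β) (y := y))
      nlinarith
    · push_neg at hcase
      have h5 : L * δ ≤ L * dist β y := by
        apply mul_le_mul_of_nonneg_left hcase hL.le
      have h6 : L * δ = 2 * C := by
        rw [hLdef]; field_simp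
      have := abs_le.mp (hfb y)
      have := abs_le.mp (hfb β)
      nlinarith
  have := hφle β
  rw [abs_le]
  constructor <;> linarith

end approx

section contint
variable {p : ℕ} (ρ : ℝ → Measure (Par p)) [∀ t, IsFiniteMeasure (ρ t)] {r Cm Cρ : ℝ}

lemma ae_norm_le (hsupp : ∀ t ∈ Icc (0:ℝ) 1, ρ t {β : Par p | r < ‖β‖} = 0)
    {t : ℝ} (ht : t ∈ Icc (0:ℝ) 1) : ∀ᵐ β ∂ρ t, ‖β‖ ≤ r := by
  rw [ae_iff]
  convert hsupp t ht using 2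
  ext β; simp [not_le]

lemma integrable_of_bound {E : Type*} [NormedAddCommGroup E] (μ : Measure (Par p))
    [IsFiniteMeasure μ] (f : Par p → E) (hf : Continuous f)
    (C : ℝ) (hC : ∀ᵐ x ∂μ, ‖f x‖ ≤ C) : Integrable f μ :=
  Integrable.mono' (integrable_const C) hf.aestronglyMeasurable hC

lemma contOn_integral (hr : 0 < r) (hCm : 0 < Cm) (hCρ : 0 ≤ Cρ)
    (hsupp : ∀ t ∈ Icc (0:ℝ) 1, ρ t {β : Par p | r < ‖β‖} = 0)
    (hmass : ∀ t ∈ Icc (0:ℝ) 1, ρ t univ ≤ ENNReal.ofReal Cm)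
    (hBL : BLLipschitz ρ Cρ) (f : Par p → ℝ) (hf : Continuous f) :
    ContinuousOn (fun t => ∫ β, f β ∂ρ t) (Icc (0:ℝ) 1) := by
  obtain ⟨C₀, hC₀⟩ := (isCompact_closedBall (0 : Par p) (r+2)).exists_bound_of_continuousOn
    hf.continuousOn
  set C : ℝ := |C₀| + 1 with hCdef
  have hC : 0 < C := by positivity
  have hfC : ∀ β : Par p, ‖β‖ ≤ r + 2 → |f β| ≤ C := by
    intro β hβ
    have h1 := hC₀ β (by rwa [Metric.mem_closedBall, dist_zero_right])
    rw [Real.norm_eq_abs] at h1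
    have := le_abs_self C₀
    linarith
  set ftil : Par p → ℝ := fun β => max (-C) (min C (f β)) with hftildef
  have hftilcont : Continuous ftil := continuous_const.max (continuous_const.min hf)
  have hftilb : ∀ β, |ftil β| ≤ C := by
    intro β
    rw [abs_le]
    exact ⟨le_max_left _ _, max_le (by linarith) (min_le_left _ _)⟩
  have hftileq : ∀ β : Par p, ‖β‖ ≤ r + 2 → ftil β = f β := by
    intro β hβ
    have h := abs_le.mp (hfC β hβ)
    rw [hftildef]
    simp only []
    rw [min_eq_right h.2, max_eq_right h.1]
  have heq : ∀ t ∈ Icc (0:ℝ) 1, ∫ β, f β ∂ρ t = ∫ β, ftil β ∂ρ t := by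
    intro t ht
    apply integral_congr_ae
    filter_upwards [ae_norm_le ρ hsupp ht] with β hβ
    exact (hftileq β (by linarith)).symm
  have hmassR : ∀ t ∈ Icc (0:ℝ) 1, (ρ t univ).toReal ≤ Cm := fun t ht =>
    ENNReal.toReal_le_of_le_ofReal hCm.le (hmass t ht)
  have hftil_int : ∀ t : ℝ, Integrable ftil (ρ t) := fun t =>
    integrable_of_bound (ρ t) ftil hftilcont C
      (Filter.Eventually.of_forall fun β => by rw [Real.norm_eq_abs]; exact hftilb β)
  have key : ∀ ε' > (0:ℝ), ∃ M : ℝ, 0 ≤ M ∧ ∀ s ∈ Icc (0:ℝ) 1, ∀ t ∈ Icc (0:ℝ) 1,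
      |(∫ β, ftil β ∂ρ t) - ∫ β, ftil β ∂ρ s| ≤ M * |t - s| + 2 * (Cm * ε') := by
    intro ε' hε'
    obtain ⟨φ, L, hL, hφb, hφlip, hφapprox⟩ := exists_lip_approx ftil hftilcont hC hftilb hr hε'
    have hφLip : LipschitzWith L.toNNReal φ := by
      apply LipschitzWith.of_dist_le_mul
      intro β γ
      rw [Real.dist_eq, Real.coe_toNNReal L hL.le]
      exact hφlip β γ
    have hφcont : Continuous φ := hφLip.continuous
    have hφint : ∀ t : ℝ, Integrable φ (ρ t) := fun t =>
      integrable_of_bound (ρ t) φ hφcont C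
        (Filter.Eventually.of_forall fun β => by rw [Real.norm_eq_abs]; exact hφb β)
    set M0 : ℝ := max C L with hM0def
    have hM0 : 0 < M0 := lt_max_of_lt_right hL
    set ψ : Par p → ℝ := fun β => φ β / M0 with hψdef
    have hψb : ∀ β, |ψ β| ≤ 1 := by
      intro β
      rw [hψdef]
      simp only []
      rw [abs_div, abs_of_pos hM0, div_le_one hM0]
      exact (hφb β).trans (le_max_left _ _)
    have hψlip : LipschitzWith 1 ψ := by
      apply LipschitzWith.of_dist_le_mul
      intro β γ
      rw [Real.dist_eq, NNReal.coe_one, one_mul]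
      rw [hψdef]
      simp only []
      rw [div_sub_div_same, abs_div, abs_of_pos hM0, div_le_iff₀ hM0]
      calc |φ β - φ γ| ≤ L * dist β γ := hφlip β γ
        _ ≤ M0 * dist β γ := by
            apply mul_le_mul_of_nonneg_right (le_max_right _ _) dist_nonneg
        _ = dist β γ * M0 := by ring
    have hBLψ := hBL ψ hψb hψlip
    refine ⟨M0 * Cρ, by positivity, fun s hs t ht => ?_⟩
    have hint_ψ : ∀ u : ℝ, ∫ β, ψ β ∂ρ u = (∫ β, φ β ∂ρ u) / M0 := fun u => integral_div _ _
    have hφest : |(∫ β, φ β ∂ρ t) - ∫ β, φ β ∂ρ s| ≤ M0 * Cρ * |t - s| := by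
      have h1 := hBLψ s hs t ht
      rw [hint_ψ, hint_ψ, div_sub_div_same, abs_div, abs_of_pos hM0, div_le_iff₀ hM0] at h1
      calc |(∫ β, φ β ∂ρ t) - ∫ β, φ β ∂ρ s| ≤ Cρ * |t - s| * M0 := h1
        _ = M0 * Cρ * |t - s| := by ring
    have hclose : ∀ u ∈ Icc (0:ℝ) 1, |(∫ β, ftil β ∂ρ u) - ∫ β, φ β ∂ρ u| ≤ Cm * ε' := by
      intro u hu
      rw [← integral_sub (hftil_int u) (hφint u)]
      have hb : ∀ᵐ β ∂ρ u, ‖ftil β - φ β‖ ≤ ε' := by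
        filter_upwards [ae_norm_le ρ hsupp hu] with β hβ
        rw [Real.norm_eq_abs]
        exact hφapprox β hβ
      calc |∫ β, ftil β - φ β ∂ρ u| ≤ ε' * (ρ u univ).toReal :=
            norm_integral_le_of_norm_le_const hb
        _ ≤ ε' * Cm := mul_le_mul_of_nonneg_left (hmassR u hu) hε'.le
        _ = Cm * ε' := by ring
    have h1 := hclose s hs
    have h2 := hclose t ht
    have h3 := abs_sub_abs_le_abs_sub ((∫ β, ftil β ∂ρ t) - ∫ β, ftil β ∂ρ s) 0
    calc |(∫ β, ftil β ∂ρ t) - ∫ β, ftil β ∂ρ s|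
        ≤ |(∫ β, ftil β ∂ρ t) - ∫ β, φ β ∂ρ t| + |(∫ β, φ β ∂ρ t) - ∫ β, φ β ∂ρ s|
            + |(∫ β, φ β ∂ρ s) - ∫ β, ftil β ∂ρ s| := by
          have := abs_sub_le ((∫ β, ftil β ∂ρ t)) ((∫ β, φ β ∂ρ t)) ((∫ β, ftil β ∂ρ s))
          have := abs_sub_le ((∫ β, φ β ∂ρ t)) ((∫ β, φ β ∂ρ s)) ((∫ β, ftil β ∂ρ s))
          linarith
      _ ≤ Cm * ε' + M0 * Cρ * |t - s| + Cm * ε' := by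
          rw [abs_sub_comm (∫ β, φ β ∂ρ s)]
          exact add_le_add (add_le_add h2 hφest) h1
      _ = M0 * Cρ * |t - s| + 2 * (Cm * ε') := by ring
  intro s hs
  rw [Metric.continuousWithinAt_iff]
  intro ε hε
  obtain ⟨M, hM, hkey⟩ := key (ε / (8 * Cm)) (by positivity)
  refine ⟨ε / (2 * (M + 1)), by positivity, fun t ht hts => ?_⟩
  rw [Real.dist_eq] at hts ⊢
  rw [heq t ht, heq s hs]
  calc |(∫ β, ftil β ∂ρ t) - ∫ β, ftil β ∂ρ s| ≤ M * |t - s| + 2 * (Cm * (ε / (8 * Cm))) :=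
        hkey s hs t ht
    _ < ε := by
        have h1 : M * |t - s| ≤ M * (ε / (2 * (M + 1))) :=
          mul_le_mul_of_nonneg_left hts.le hM
        have h2 : M * (ε / (2 * (M + 1))) < ε / 2 := by
          have hM1 : (0:ℝ) < 2 * (M + 1) := by linarith
          rw [← mul_div_assoc, div_lt_div_iff₀ hM1 two_pos]
          nlinarith
        have h3 : 2 * (Cm * (ε / (8 * Cm))) = ε / 4 := by field_simp; ring
        linarith
end contint

lemma contOn_integral_vec {p D N : ℕ} (ρ : ℝ → Measure (Par p)) [∀ t, IsFiniteMeasure (ρ t)]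
    {r Cm Cρ : ℝ} (hr : 0 < r) (hCm : 0 < Cm) (hCρ : 0 ≤ Cρ)
    (hsupp : ∀ t ∈ Icc (0:ℝ) 1, ρ t {β : Par p | r < ‖β‖} = 0)
    (hmass : ∀ t ∈ Icc (0:ℝ) 1, ρ t univ ≤ ENNReal.ofReal Cm)
    (hBL : BLLipschitz ρ Cρ) (f : Par p → Mat D N) (hf : Continuous f)
    (hint : ∀ t ∈ Icc (0:ℝ) 1, Integrable f (ρ t)) :
    ContinuousOn (fun t => ∫ β, f β ∂ρ t) (Icc (0:ℝ) 1) := by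
  set e := EuclideanSpace.equiv (Fin D × Fin (N+1)) ℝ with hedef
  have h1 : ContinuousOn (fun t => e (∫ β, f β ∂ρ t)) (Icc (0:ℝ) 1) := by
    rw [continuousOn_pi]
    intro k
    set πk : Mat D N →L[ℝ] ℝ :=
      (ContinuousLinearMap.proj k).comp e.toContinuousLinearMap with hπkdef
    have hπ : ∀ t ∈ Icc (0:ℝ) 1, (fun β : Par p => πk (f β)) = fun β => f β k :=
      fun _ _ => rfl
    have hcord : Continuous fun β : Par p => πk (f β) := πk.continuous.comp hf
    have hmain := contOn_integral ρ hr hCm hCρ hsupp hmass hBL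
      (fun β => πk (f β)) hcord
    refine hmain.congr fun t ht => ?_
    show e (∫ β, f β ∂ρ t) k = ∫ β, πk (f β) ∂ρ t
    exact (πk.integral_comp_comm (hint t ht)).symm
  have h2 := e.symm.continuous.comp_continuousOn h1
  simpa only [Function.comp_def, ContinuousLinearEquiv.symm_apply_apply] using h2

lemma hasDerivWithinAt_Ici_of_Icc {E : Type*} [NormedAddCommGroup E] [NormedSpace ℝ E]
    {f : ℝ → E} {d : E} {t : ℝ} (ht : t ∈ Ico (0:ℝ) 1)
    (h : HasDerivWithinAt f d (Icc (0:ℝ) 1) t) : HasDerivWithinAt f d (Ici t) t :=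
  (h.mono (Icc_subset_Icc ht.1 le_rfl)).mono_of_mem_nhdsWithin (Icc_mem_nhdsGE_of_mem ⟨le_rfl, ht.2⟩)

set_option maxHeartbeats 1000000 in
/-- existence, uniqueness and Lipschitz dependence for the continuous
Transformer ODE `dT/dt = ∫ g(T(t),β) dρ_t(β)`, `T(0) = H`, on `[0,1]`. -/
theorem stmt0 (D N p : ℕ) (g : Mat D N → Par p → Mat D N)
    (K r Cm Cρ : ℝ) (φT : ℝ → ℝ)
    (hK : 0 < K) (hr : 0 < r) (hCm : 0 < Cm) (hCρ : 0 ≤ Cρ)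
    (hgdiff : Differentiable ℝ fun z : Mat D N × Par p => g z.1 z.2)
    (hG1 : ∀ (T : Mat D N) (β : Par p),
      colNorm (g T β) ≤ K * colNorm T * (1 + ‖β‖ + ‖β‖ ^ 2))
    (hφT : Continuous φT ∧ Monotone φT)
    (hG3 : ∀ (T : Mat D N) (β : Par p),
      ‖fderiv ℝ (fun T' => g T' β) T‖ ≤ φT ‖T‖ * (1 + ‖β‖ + ‖β‖ ^ 2))
    (ρ : ℝ → Measure (Par p)) [∀ t, IsFiniteMeasure (ρ t)]
    (hsupp : ∀ t ∈ Icc (0 : ℝ) 1, ρ t {β : Par p | r < ‖β‖} = 0)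
    (hmass : ∀ t ∈ Icc (0 : ℝ) 1, ρ t univ ≤ ENNReal.ofReal Cm)
    (hBL : BLLipschitz ρ Cρ) :
    ∃ T : Mat D N → ℝ → Mat D N,
      -- existence: for every `H`, `T H` is a continuously differentiable solution on `[0,1]`
      (∀ H : Mat D N,
        T H 0 = H ∧
        (∀ t ∈ Icc (0 : ℝ) 1,
          HasDerivWithinAt (T H) (∫ β, g (T H t) β ∂(ρ t)) (Icc (0 : ℝ) 1) t) ∧
        ContinuousOn (fun t => ∫ β, g (T H t) β ∂(ρ t)) (Icc (0 : ℝ) 1)) ∧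
      -- uniqueness on `[0,1]`
      (∀ (H : Mat D N) (T' : ℝ → Mat D N), T' 0 = H →
        (∀ t ∈ Icc (0 : ℝ) 1,
          HasDerivWithinAt T' (∫ β, g (T' t) β ∂(ρ t)) (Icc (0 : ℝ) 1) t) →
        EqOn (T H) T' (Icc (0 : ℝ) 1)) ∧
      -- joint Lipschitz continuity of `(H, t) ↦ T(H, t)` on `{‖H‖_{2,col} ≤ B} × [0,1]`
      (∀ B : ℝ, 0 < B → ∃ Lc : ℝ, 0 ≤ Lc ∧
        ∀ H H' : Mat D N, colNorm H ≤ B → colNorm H' ≤ B →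
          ∀ t ∈ Icc (0 : ℝ) 1, ∀ t' ∈ Icc (0 : ℝ) 1,
            ‖T H t - T H' t'‖ ≤ Lc * (‖H - H'‖ + |t - t'|)) := by
  classical
  obtain ⟨hφTc, hφTm⟩ := hφT
  set c : ℝ := 1 + r + r ^ 2 with hcdef
  have hc0 : 0 < c := by nlinarith
  set sq : ℝ := Real.sqrt (N + 1) with hsqdef
  have hsq1 : 1 ≤ sq := by
    have h := Real.sqrt_le_sqrt (show (1:ℝ) ≤ (N:ℝ) + 1 by push_cast; linarith)
    rwa [Real.sqrt_one] at h
  have hsq0 : 0 < sq := lt_of_lt_of_le one_pos hsq1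
  set c₁ : ℝ := sq * K * c with hc₁def
  have hc₁ : 0 < c₁ := mul_pos (mul_pos hsq0 hK) hc0
  set c₂ : ℝ := Cm * c₁ with hc₂def
  have hc₂ : 0 < c₂ := mul_pos hCm hc₁
  have hpoly : ∀ β : Par p, ‖β‖ ≤ r → 1 + ‖β‖ + ‖β‖ ^ 2 ≤ c := by
    intro β hβ
    have h0 := norm_nonneg β
    nlinarith
  have hpoly0 : ∀ β : Par p, (0:ℝ) < 1 + ‖β‖ + ‖β‖ ^ 2 := by
    intro β; have := norm_nonneg β; nlinarith
  have hgcont : Continuous fun z : Mat D N × Par p => g z.1 z.2 := hgdiff.continuous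
  have hgx : ∀ β : Par p, Differentiable ℝ (fun x : Mat D N => g x β) := fun β =>
    hgdiff.comp (differentiable_id.prodMk (differentiable_const β))
  have hgβ : ∀ x : Mat D N, Continuous (fun β : Par p => g x β) := fun x =>
    hgcont.comp (continuous_const.prodMk continuous_id)
  have h_gbound : ∀ (x : Mat D N) (β : Par p), ‖β‖ ≤ r → ‖g x β‖ ≤ c₁ * ‖x‖ := by
    intro x β hβ
    calc ‖g x β‖ ≤ sq * colNorm (g x β) := norm_le_sqrt_mul_colNorm _
      _ ≤ sq * (K * colNorm x * (1 + ‖β‖ + ‖β‖ ^ 2)) :=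
          mul_le_mul_of_nonneg_left (hG1 x β) hsq0.le
      _ ≤ sq * (K * ‖x‖ * c) := by
          refine mul_le_mul_of_nonneg_left ?_ hsq0.le
          refine mul_le_mul (mul_le_mul_of_nonneg_left (colNorm_le_norm x) hK.le)
            (hpoly β hβ) (hpoly0 β).le (by positivity)
      _ = c₁ * ‖x‖ := by rw [hc₁def]; ring
  set lipg : ℝ → ℝ := fun R => max (φT R) 0 * c with hlipgdef
  have hlipg0 : ∀ R, 0 ≤ lipg R := fun R => mul_nonneg (le_max_right _ _) hc0.le
  have h_glip : ∀ (R : ℝ) (β : Par p), ‖β‖ ≤ r → ∀ x ∈ Metric.closedBall (0 : Mat D N) R,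
      ∀ y ∈ Metric.closedBall (0 : Mat D N) R, ‖g x β - g y β‖ ≤ lipg R * ‖x - y‖ := by
    intro R β hβ x hx y hy
    have hconv : Convex ℝ (Metric.closedBall (0 : Mat D N) R) := convex_closedBall _ _
    refine hconv.norm_image_sub_le_of_norm_fderiv_le (f := fun x' => g x' β)
      (fun z _ => (hgx β).differentiableAt) ?_ hy hx
    intro z hz
    have hz' : ‖z‖ ≤ R := by rwa [Metric.mem_closedBall, dist_zero_right] at hz
    calc ‖fderiv ℝ (fun x' => g x' β) z‖ ≤ φT ‖z‖ * (1 + ‖β‖ + ‖β‖ ^ 2) := hG3 z β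
      _ ≤ max (φT ‖z‖) 0 * (1 + ‖β‖ + ‖β‖ ^ 2) :=
          mul_le_mul_of_nonneg_right (le_max_left _ _) (hpoly0 β).le
      _ ≤ max (φT R) 0 * c := by
          refine mul_le_mul (max_le_max (hφTm hz') le_rfl) (hpoly β hβ) (hpoly0 β).le
            (le_max_right _ _)
  set F : ℝ → Mat D N → Mat D N := fun t x => ∫ β, g x β ∂ρ t with hFdef
  have h_ae : ∀ t ∈ Icc (0:ℝ) 1, ∀ᵐ β ∂ρ t, ‖β‖ ≤ r := fun t ht => ae_norm_le ρ hsupp ht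
  have h_int : ∀ t ∈ Icc (0:ℝ) 1, ∀ x : Mat D N, Integrable (fun β => g x β) (ρ t) := by
    intro t ht x
    apply integrable_of_bound (ρ t) _ (hgβ x) (c₁ * ‖x‖)
    filter_upwards [h_ae t ht] with β hβ using h_gbound x β hβ
  have hmassR : ∀ t ∈ Icc (0:ℝ) 1, (ρ t univ).toReal ≤ Cm := fun t ht =>
    ENNReal.toReal_le_of_le_ofReal hCm.le (hmass t ht)
  have h_Fbound : ∀ t ∈ Icc (0:ℝ) 1, ∀ x : Mat D N, ‖F t x‖ ≤ c₂ * ‖x‖ := by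
    intro t ht x
    calc ‖F t x‖ ≤ (c₁ * ‖x‖) * (ρ t univ).toReal :=
          norm_integral_le_of_norm_le_const
            (by filter_upwards [h_ae t ht] with β hβ using h_gbound x β hβ)
      _ ≤ (c₁ * ‖x‖) * Cm := mul_le_mul_of_nonneg_left (hmassR t ht) (by positivity)
      _ = c₂ * ‖x‖ := by rw [hc₂def]; ring
  have h_Flip : ∀ (R : ℝ), ∀ t ∈ Icc (0:ℝ) 1, ∀ x ∈ Metric.closedBall (0 : Mat D N) R,
      ∀ y ∈ Metric.closedBall (0 : Mat D N) R, ‖F t x - F t y‖ ≤ (Cm * lipg R) * ‖x - y‖ := by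
    intro R t ht x hx y hy
    rw [hFdef]
    simp only []
    rw [← integral_sub (h_int t ht x) (h_int t ht y)]
    calc ‖∫ β, g x β - g y β ∂ρ t‖ ≤ (lipg R * ‖x - y‖) * (ρ t univ).toReal :=
          norm_integral_le_of_norm_le_const
            (by filter_upwards [h_ae t ht] with β hβ using h_glip R β hβ x hx y hy)
      _ ≤ (lipg R * ‖x - y‖) * Cm := by
          refine mul_le_mul_of_nonneg_left (hmassR t ht)
            (mul_nonneg (hlipg0 R) (norm_nonneg _))
      _ = (Cm * lipg R) * ‖x - y‖ := by ring
  have h_Fcont : ∀ x : Mat D N, ContinuousOn (fun t => F t x) (Icc (0:ℝ) 1) := by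
    intro x
    apply contOn_integral_vec ρ hr hCm hCρ hsupp hmass hBL _ (hgβ x)
    intro t ht
    exact h_int t ht x
  -- the modified (cut-off plus time-restricted) vector field used for uniqueness arguments
  set v : ℝ → Mat D N → Mat D N := fun t x => if t ∈ Icc (0:ℝ) 1 then F t x else 0 with hvdef
  have hvlip : ∀ R : ℝ, ∀ t : ℝ,
      LipschitzOnWith (Cm * lipg R).toNNReal (v t) (Metric.closedBall (0 : Mat D N) R) := by
    intro R t
    rw [lipschitzOnWith_iff_dist_le_mul]
    intro x hx y hy
    rw [hvdef]
    simp only []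
    rw [Real.coe_toNNReal _ (mul_nonneg hCm.le (hlipg0 R))]
    by_cases ht : t ∈ Icc (0:ℝ) 1
    · rw [if_pos ht, if_pos ht, dist_eq_norm, dist_eq_norm]
      exact h_Flip R t ht x hx y hy
    · rw [if_neg ht, if_neg ht, dist_self]
      positivity
  -- a priori bound for any solution
  have apriori : ∀ α : ℝ → Mat D N,
      (∀ t ∈ Icc (0:ℝ) 1, HasDerivWithinAt α (F t (α t)) (Icc (0:ℝ) 1) t) →
      ∀ t ∈ Icc (0:ℝ) 1, ‖α t‖ ≤ ‖α 0‖ * Real.exp c₂ := by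
    intro α hα t ht
    have hαcont : ContinuousOn α (Icc (0:ℝ) 1) := fun u hu => (hα u hu).continuousWithinAt
    have h := norm_le_gronwallBound_of_norm_deriv_right_le (f := α)
      (f' := fun u => F u (α u)) (δ := ‖α 0‖) (K := c₂) (ε := 0) (a := 0) (b := 1) hαcont
      (fun s hs => hasDerivWithinAt_Ici_of_Icc hs (hα s (Ico_subset_Icc_self hs)))
      le_rfl
      (fun s hs => by
        have h1 := h_Fbound s (Ico_subset_Icc_self hs) (α s)
        linarith)
      t ht
    rw [gronwallBound_ε0, sub_zero] at h
    refine h.trans (mul_le_mul_of_nonneg_left ?_ (norm_nonneg _))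
    exact Real.exp_le_exp.mpr (by nlinarith [ht.1, ht.2, hc₂.le])
  -- existence of solutions
  have main : ∀ H : Mat D N, ∃ α : ℝ → Mat D N, α 0 = H ∧
      (∀ t ∈ Icc (0:ℝ) 1, HasDerivWithinAt α (F t (α t)) (Icc (0:ℝ) 1) t) ∧
      (∀ t ∈ Icc (0:ℝ) 1, ‖α t‖ ≤ ‖H‖ * Real.exp c₂) := by
    intro H
    set R₀ : ℝ := (‖H‖ + 1) * Real.exp c₂ with hR₀def
    have hR₀ : 0 < R₀ := by positivity
    set G : ℝ → Mat D N → Mat D N := fun t x => F t (ret R₀ x) with hGdef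
    set CC : ℝ := c₂ * R₀ with hCCdef
    have hCC0 : 0 ≤ CC := by positivity
    set RR : ℝ := max CC 1 with hRRdef
    set LL : NNReal := (2 * (Cm * lipg R₀)).toNNReal with hLLdef
    have hLLcoe : (LL : ℝ) = 2 * (Cm * lipg R₀) :=
      Real.coe_toNNReal _ (by positivity)
    have hPL : IsPicardLindelof G (⟨0, ⟨le_refl 0, zero_le_one⟩⟩ : Icc (0:ℝ) 1) H
        RR.toNNReal 0 CC.toNNReal LL := by
      refine ⟨?_, ?_, ?_, ?_⟩
      · intro t ht
        apply LipschitzWith.lipschitzOnWith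
        apply LipschitzWith.of_dist_le_mul
        intro x y
        rw [dist_eq_norm, dist_eq_norm, hLLcoe]
        calc ‖G t x - G t y‖ ≤ (Cm * lipg R₀) * ‖ret R₀ x - ret R₀ y‖ :=
              h_Flip R₀ t ht _ (mem_ret hR₀ x) _ (mem_ret hR₀ y)
          _ ≤ (Cm * lipg R₀) * (2 * ‖x - y‖) :=
              mul_le_mul_of_nonneg_left (ret_lip hR₀ x y)
                (mul_nonneg hCm.le (hlipg0 R₀))
          _ = (2 * (Cm * lipg R₀)) * ‖x - y‖ := by ring
      · intro x _
        exact h_Fcont (ret R₀ x)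
      · intro t ht x _
        calc ‖G t x‖ ≤ c₂ * ‖ret R₀ x‖ := h_Fbound t ht _
          _ ≤ c₂ * R₀ := mul_le_mul_of_nonneg_left (norm_ret_le hR₀ x) hc₂.le
          _ = (CC.toNNReal : ℝ) := by rw [Real.coe_toNNReal _ hCC0]
      · show (CC.toNNReal : ℝ) * max ((1:ℝ) - 0) (0 - 0) ≤ (RR.toNNReal : ℝ) - ((0:NNReal):ℝ)
        rw [Real.coe_toNNReal _ hCC0, NNReal.coe_zero, sub_zero,
          Real.coe_toNNReal _ (le_trans zero_le_one (le_max_right _ _))]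
        have : max (1 : ℝ) (0 - 0) = 1 := by norm_num
        rw [this, mul_one, sub_zero]
        exact le_max_left _ _
    obtain ⟨α, hα0, hαderiv⟩ : ∃ α : ℝ → Mat D N, α 0 = H ∧
        ∀ t ∈ Icc (0:ℝ) 1, HasDerivWithinAt α (G t (α t)) (Icc (0:ℝ) 1) t :=
      hPL.exists_eq_forall_mem_Icc_hasDerivWithinAt₀
    have hαcont : ContinuousOn α (Icc (0:ℝ) 1) := fun u hu => (hαderiv u hu).continuousWithinAt
    have hgron : ∀ t ∈ Icc (0:ℝ) 1, ‖α t‖ ≤ ‖H‖ * Real.exp (c₂ * t) := by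
      intro t ht
      have h := norm_le_gronwallBound_of_norm_deriv_right_le (f := α)
        (f' := fun u => G u (α u)) (δ := ‖H‖) (K := c₂) (ε := 0) (a := 0) (b := 1) hαcont
        (fun s hs => hasDerivWithinAt_Ici_of_Icc hs (hαderiv s (Ico_subset_Icc_self hs)))
        (le_of_eq (by rw [hα0]))
        (fun s hs => by
          have h1 : ‖G s (α s)‖ ≤ c₂ * ‖ret R₀ (α s)‖ :=
            h_Fbound s (Ico_subset_Icc_self hs) _
          have h2 := norm_ret_le_self hR₀ (α s)
          have h3 : c₂ * ‖ret R₀ (α s)‖ ≤ c₂ * ‖α s‖ :=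
            mul_le_mul_of_nonneg_left h2 hc₂.le
          linarith)
        t ht
      rwa [gronwallBound_ε0, sub_zero] at h
    have hball : ∀ t ∈ Icc (0:ℝ) 1, ‖α t‖ ≤ ‖H‖ * Real.exp c₂ := by
      intro t ht
      refine (hgron t ht).trans (mul_le_mul_of_nonneg_left ?_ (norm_nonneg H))
      exact Real.exp_le_exp.mpr (by nlinarith [ht.1, ht.2, hc₂.le])
    refine ⟨α, hα0, fun t ht => ?_, hball⟩
    have hle : ‖α t‖ ≤ R₀ := by
      have h1 := hball t ht
      have h2 := Real.exp_pos c₂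
      have h3 := norm_nonneg H
      rw [hR₀def]
      nlinarith
    have hret : ret R₀ (α t) = α t := ret_eq_self hR₀ hle
    have hd := hαderiv t ht
    rw [hGdef] at hd
    simp only [] at hd
    rwa [hret] at hd
  -- uniqueness
  have uniq : ∀ α α' : ℝ → Mat D N,
      (∀ t ∈ Icc (0:ℝ) 1, HasDerivWithinAt α (F t (α t)) (Icc (0:ℝ) 1) t) →
      (∀ t ∈ Icc (0:ℝ) 1, HasDerivWithinAt α' (F t (α' t)) (Icc (0:ℝ) 1) t) →
      α 0 = α' 0 → EqOn α α' (Icc (0:ℝ) 1) := by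
    intro α α' hα hα' h0
    set R' : ℝ := ‖α 0‖ * Real.exp c₂ + 1 with hR'def
    have hmemα : ∀ t ∈ Ico (0:ℝ) 1, α t ∈ Metric.closedBall (0 : Mat D N) R' := by
      intro t ht
      rw [Metric.mem_closedBall, dist_zero_right]
      have := apriori α hα t (Ico_subset_Icc_self ht)
      linarith
    have hmemα' : ∀ t ∈ Ico (0:ℝ) 1, α' t ∈ Metric.closedBall (0 : Mat D N) R' := by
      intro t ht
      rw [Metric.mem_closedBall, dist_zero_right]
      have := apriori α' hα' t (Ico_subset_Icc_self ht)
      rw [← h0] at this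
      linarith
    refine ODE_solution_unique_of_mem_Icc_right (v := v)
      (s := fun _ => Metric.closedBall (0 : Mat D N) R') (fun t _ => hvlip R' t)
      (fun u hu => (hα u hu).continuousWithinAt) ?_ hmemα
      (fun u hu => (hα' u hu).continuousWithinAt) ?_ hmemα' h0
    · intro t ht
      have hd := hasDerivWithinAt_Ici_of_Icc ht (hα t (Ico_subset_Icc_self ht))
      rw [hvdef]
      simp only []
      rwa [if_pos (Ico_subset_Icc_self ht)]
    · intro t ht
      have hd := hasDerivWithinAt_Ici_of_Icc ht (hα' t (Ico_subset_Icc_self ht))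
      rw [hvdef]
      simp only []
      rwa [if_pos (Ico_subset_Icc_self ht)]
  set T : Mat D N → ℝ → Mat D N := fun H => Classical.choose (main H) with hTdef
  have hT : ∀ H : Mat D N, T H 0 = H ∧
      (∀ t ∈ Icc (0:ℝ) 1, HasDerivWithinAt (T H) (F t (T H t)) (Icc (0:ℝ) 1) t) ∧
      (∀ t ∈ Icc (0:ℝ) 1, ‖T H t‖ ≤ ‖H‖ * Real.exp c₂) := fun H =>
    Classical.choose_spec (main H)
  refine ⟨T, ?_, ?_, ?_⟩
  · -- existence bullet
    intro H
    obtain ⟨h0, hderiv, hbd⟩ := hT H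
    refine ⟨h0, hderiv, ?_⟩
    intro s hs
    have hTcont : ContinuousOn (T H) (Icc (0:ℝ) 1) := fun u hu =>
      (hderiv u hu).continuousWithinAt
    set R₀ : ℝ := ‖H‖ * Real.exp c₂ + 1 with hR₀def
    have hmem : ∀ u ∈ Icc (0:ℝ) 1, T H u ∈ Metric.closedBall (0 : Mat D N) R₀ := by
      intro u hu
      rw [Metric.mem_closedBall, dist_zero_right]
      have := hbd u hu
      linarith
    have h1 : Filter.Tendsto (fun t => F t (T H t) - F t (T H s))
        (nhdsWithin s (Icc (0:ℝ) 1)) (nhds 0) := by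
      apply squeeze_zero_norm' (a := fun t => (Cm * lipg R₀) * ‖T H t - T H s‖)
      · filter_upwards [self_mem_nhdsWithin] with t ht
        exact h_Flip R₀ t ht _ (hmem t ht) _ (hmem s hs)
      · have h2 : Filter.Tendsto (fun t => T H t - T H s)
            (nhdsWithin s (Icc (0:ℝ) 1)) (nhds 0) := by
          have h3 := (hTcont s hs).sub_const (T H s)
          rwa [sub_self] at h3
        have h4 := (h2.norm).const_mul (Cm * lipg R₀)
        simpa using h4
    have h2 : Filter.Tendsto (fun t => F t (T H s)) (nhdsWithin s (Icc (0:ℝ) 1))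
        (nhds (F s (T H s))) := h_Fcont (T H s) s hs
    have h3 := h1.add h2
    rw [zero_add] at h3
    have h4 : ∀ t : ℝ, (F t (T H t) - F t (T H s)) + F t (T H s) = F t (T H t) := fun t => by
      abel
    exact (Filter.Tendsto.congr h4 h3 : ContinuousWithinAt (fun t => F t (T H t)) (Icc 0 1) s)
  · -- uniqueness bullet
    intro H T' hT'0 hT'deriv
    exact uniq (T H) T' (hT H).2.1 hT'deriv ((hT H).1.trans hT'0.symm)
  · -- Lipschitz bullet
    intro B hB
    set B' : ℝ := sq * B with hB'def
    have hB' : 0 < B' := mul_pos hsq0 hB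
    set RB : ℝ := B' * Real.exp c₂ + 1 with hRBdef
    have hRB : 0 < RB := by positivity
    set LB : ℝ := Cm * lipg RB with hLBdef
    have hLB0 : 0 ≤ LB := mul_nonneg hCm.le (hlipg0 RB)
    refine ⟨Real.exp LB + c₂ * RB, by positivity, ?_⟩
    intro H H' hH hH' t ht t' ht'
    have hnormH : ‖H‖ ≤ B' := by
      refine (norm_le_sqrt_mul_colNorm H).trans ?_
      rw [hB'def]
      exact mul_le_mul_of_nonneg_left hH hsq0.le
    have hnormH' : ‖H'‖ ≤ B' := by
      refine (norm_le_sqrt_mul_colNorm H').trans ?_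
      rw [hB'def]
      exact mul_le_mul_of_nonneg_left hH' hsq0.le
    have hTmem : ∀ u ∈ Ico (0:ℝ) 1, T H u ∈ Metric.closedBall (0 : Mat D N) RB := by
      intro u hu
      rw [Metric.mem_closedBall, dist_zero_right]
      have h1 := (hT H).2.2 u (Ico_subset_Icc_self hu)
      have h2 := Real.exp_pos c₂
      nlinarith
    have hTmem' : ∀ u ∈ Ico (0:ℝ) 1, T H' u ∈ Metric.closedBall (0 : Mat D N) RB := by
      intro u hu
      rw [Metric.mem_closedBall, dist_zero_right]
      have h1 := (hT H').2.2 u (Ico_subset_Icc_self hu)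
      have h2 := Real.exp_pos c₂
      nlinarith
    have hTmemIcc : ∀ u ∈ Icc (0:ℝ) 1, ‖T H' u‖ ≤ RB := by
      intro u hu
      have h1 := (hT H').2.2 u hu
      have h2 := Real.exp_pos c₂
      nlinarith
    have hderivIci : ∀ (J : Mat D N), ∀ u ∈ Ico (0:ℝ) 1,
        HasDerivWithinAt (T J) (v u (T J u)) (Ici u) u := by
      intro J u hu
      have hd := hasDerivWithinAt_Ici_of_Icc hu ((hT J).2.1 u (Ico_subset_Icc_self hu))
      rw [hvdef]
      simp only []
      rwa [if_pos (Ico_subset_Icc_self hu)]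
    have hdistH : dist (T H t) (T H' t) ≤ ‖H - H'‖ * Real.exp LB := by
      have hcontH : ContinuousOn (T H) (Icc (0:ℝ) 1) := fun u hu =>
        (((hT H).2.1) u hu).continuousWithinAt
      have hcontH' : ContinuousOn (T H') (Icc (0:ℝ) 1) := fun u hu =>
        (((hT H').2.1) u hu).continuousWithinAt
      have h := dist_le_of_trajectories_ODE_of_mem (v := v)
        (s := fun _ => Metric.closedBall (0 : Mat D N) RB) (K := LB.toNNReal) (fun t _ => hvlip RB t)
        hcontH (hderivIci H) hTmem hcontH' (hderivIci H') hTmem'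
        (le_of_eq (by rw [(hT H).1, (hT H').1])) t ht
      refine h.trans ?_
      rw [dist_eq_norm]
      refine mul_le_mul_of_nonneg_left ?_ (norm_nonneg _)
      apply Real.exp_le_exp.mpr
      rw [Real.coe_toNNReal _ hLB0]
      nlinarith [ht.1, ht.2]
    have htime : ‖T H' t - T H' t'‖ ≤ (c₂ * RB) * |t - t'| := by
      have h := Convex.norm_image_sub_le_of_norm_hasDerivWithin_le (f := T H')
        (f' := fun u => F u (T H' u)) (s := Icc (0:ℝ) 1) (C := c₂ * RB)
        (fun u hu => (hT H').2.1 u hu)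
        (fun u hu => by
          have h1 := h_Fbound u hu (T H' u)
          have h2 := hTmemIcc u hu
          nlinarith)
        (convex_Icc 0 1) ht' ht
      rwa [Real.norm_eq_abs] at h
    have hsplit : ‖T H t - T H' t'‖ ≤ ‖T H t - T H' t‖ + ‖T H' t - T H' t'‖ := by
      have : T H t - T H' t' = (T H t - T H' t) + (T H' t - T H' t') := by abel
      rw [this]
      exact norm_add_le _ _
    have h1 : ‖T H t - T H' t‖ ≤ ‖H - H'‖ * Real.exp LB := by
      rw [← dist_eq_norm]
      exact hdistH
    nlinarith [norm_nonneg (H - H'), abs_nonneg (t - t'), Real.exp_pos LB,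
      mul_nonneg (mul_nonneg hc₂.le hRB.le) (norm_nonneg (H - H')),
      mul_nonneg (Real.exp_pos LB).le (abs_nonneg (t - t'))]
end
end

section
/- Assume ‖H‖_{2,col} ≤ B, |y| ≤ B, that f and h satisfy (G1) and (G3), and that the parameters satisfy (1/(ML))∑_{l,j}(‖θ_{l,j}‖²+‖w_{l,j}‖²) ≤ A². For a grid point t_l, define the discrete adjoint vector p̂_Θ(H,t_l) ∈ ℝ^{D×(N+1)} by vec(p̂_Θ(H,t_l))ᵀ = (Read[T̂_Θ(H,1)] − y)·e_{i₀}ᵀ·A_{L−1,h}A_{L−1,f}⋯A_{l,h}A_{l,f}, where A_{m,f} = I + (Δt/2)M^{−1}∑_{j=1}^{M}∇_{vec(T)}vec(f(T̂_Θ(H,t_m),θ_{m,j})), A_{m,h} = I + (Δt/2)M^{−1}∑_{j=1}^{M}∇_{vec(T)}vec(h(T̂_Θ(H,t_m+Δt/2),w_{m,j})), and e_{i₀} is the standard basis vector selecting the read-out coordinate of vec. Then, with B_T = B·exp(K(1+A+A²)): ‖p̂_Θ(H,t_l)‖_F ≤ (B + B_T)·exp(φ_T(√(N+1)·B_T)·(1+A+A²))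 for every l ∈ {0,…,L−1}. -/
open MeasureTheory Set

noncomputable section

/-- The discrete Transformer: `T̂(t_{l+1})` is obtained from `T̂(t_l)` by one self-attention
half-step with encoder `f` followed by one feed-forward half-step with encoder `h`,
with step size `Δt/2 = 1/(2L)` and `M` heads. -/
noncomputable def Tdis {D N q : ℕ} (f h : Mat D N → Par q → Mat D N) (L M : ℕ)
    (θ w : ℕ → Fin M → Par q) (H : Mat D N) : ℕ → Mat D N
  | 0 => H
  | l + 1 =>
    let T := Tdis f h L M θ w H l
    let T' := T + (2 * (L : ℝ) * (M : ℝ))⁻¹ • ∑ j : Fin M, f T (θ l j)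
    T' + (2 * (L : ℝ) * (M : ℝ))⁻¹ • ∑ j : Fin M, h T' (w l j)

/-- The discrete Transformer at the half grid point `t_l + Δt/2`. -/
noncomputable def TdisHalf {D N q : ℕ} (f h : Mat D N → Par q → Mat D N) (L M : ℕ)
    (θ w : ℕ → Fin M → Par q) (H : Mat D N) (l : ℕ) : Mat D N :=
  Tdis f h L M θ w H l +
    (2 * (L : ℝ) * (M : ℝ))⁻¹ • ∑ j : Fin M, f (Tdis f h L M θ w H l) (θ l j)

/-- The Jacobian factor of the self-attention half-step at layer `l`. -/
noncomputable def AfOp {D N q : ℕ} (f h : Mat D N → Par q → Mat D N) (L M : ℕ)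
    (θ w : ℕ → Fin M → Par q) (H : Mat D N) (l : ℕ) : Mat D N →L[ℝ] Mat D N :=
  1 + (2 * (L : ℝ) * (M : ℝ))⁻¹ •
    ∑ j : Fin M, fderiv ℝ (fun T => f T (θ l j)) (Tdis f h L M θ w H l)

/-- The Jacobian factor of the feed-forward half-step at layer `l`. -/
noncomputable def AhOp {D N q : ℕ} (f h : Mat D N → Par q → Mat D N) (L M : ℕ)
    (θ w : ℕ → Fin M → Par q) (H : Mat D N) (l : ℕ) : Mat D N →L[ℝ] Mat D N :=
  1 + (2 * (L : ℝ) * (M : ℝ))⁻¹ •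
    ∑ j : Fin M, fderiv ℝ (fun T => h T (w l j)) (TdisHalf f h L M θ w H l)

/-- The ordered backward product `A_{L-1,h} A_{L-1,f} ⋯ A_{l,h} A_{l,f}`. -/
noncomputable def backProd {D N q : ℕ} (f h : Mat D N → Par q → Mat D N) (L M : ℕ)
    (θ w : ℕ → Fin M → Par q) (H : Mat D N) (l : ℕ) : Mat D N →L[ℝ] Mat D N :=
  (List.ofFn fun m : Fin (L - l) =>
    AhOp f h L M θ w H (L - 1 - (m : ℕ)) * AfOp f h L M θ w H (L - 1 - (m : ℕ))).prod

/-- The discrete adjoint vector `p̂_Θ(H, t_l)`, whose (row) vectorization is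
`(Read[T̂(1)] - y) · e_{i₀}ᵀ · A_{L-1,h} A_{L-1,f} ⋯ A_{l,h} A_{l,f}`. -/
noncomputable def phat {D N q : ℕ} (f h : Mat D N → Par q → Mat D N) (i₀ : Fin D) (yv : ℝ)
    (L M : ℕ) (θ w : ℕ → Fin M → Par q) (H : Mat D N) (l : ℕ) : Mat D N :=
  (Tdis f h L M θ w H L (i₀, Fin.last N) - yv) •
    ContinuousLinearMap.adjoint (backProd f h L M θ w H l)
      (EuclideanSpace.single (i₀, Fin.last N) (1 : ℝ))

/-! ### Auxiliary lemmas -/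

section Aux

variable {D N : ℕ}

lemma matCol_add (Y Z : Mat D N) (j : Fin (N+1)) : matCol (Y + Z) j = matCol Y j + matCol Z j := rfl

lemma matCol_smul (c : ℝ) (Z : Mat D N) (j : Fin (N+1)) : matCol (c • Z) j = c • matCol Z j := rfl

lemma matCol_sum {ι : Type*} (s : Finset ι) (g : ι → Mat D N) (j : Fin (N+1)) :
    matCol (∑ i ∈ s, g i) j = ∑ i ∈ s, matCol (g i) j := by
  classical
  induction s using Finset.induction with
  | empty => rfl
  | insert _ _ h ih => simp [Finset.sum_insert h, ← ih, matCol_add]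

lemma colNorm_le {c : ℝ} (Z : Mat D N) (h : ∀ j, ‖matCol Z j‖ ≤ c) : colNorm Z ≤ c := ciSup_le h

lemma abs_entry_le_colNorm (Z : Mat D N) (i : Fin D) (j : Fin (N+1)) : |Z (i,j)| ≤ colNorm Z := by
  refine le_trans ?_ (norm_matCol_le_colNorm Z j)
  rw [EuclideanSpace.norm_eq, ← Real.sqrt_sq_eq_abs]
  apply Real.sqrt_le_sqrt
  have : Z (i,j) ^ 2 = ‖matCol Z j i‖ ^ 2 := by simp [Real.norm_eq_abs, sq_abs]; rfl
  rw [this]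
  exact Finset.single_le_sum (f := fun i' => ‖matCol Z j i'‖ ^ 2) (fun i' _ => by positivity)
    (Finset.mem_univ i)

lemma norm_matCol_sq (Z : Mat D N) (j : Fin (N+1)) :
    ‖matCol Z j‖ ^ 2 = ∑ i : Fin D, Z (i,j) ^ 2 := by
  rw [EuclideanSpace.norm_eq, Real.sq_sqrt (by positivity)]
  refine Finset.sum_congr rfl fun i _ => ?_
  simp [Real.norm_eq_abs, sq_abs]
  rfl

lemma frob_le_colNorm (Z : Mat D N) : ‖Z‖ ≤ Real.sqrt ((N:ℝ)+1) * colNorm Z := by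
  have h1 : ‖Z‖ = Real.sqrt (∑ p : Fin D × Fin (N+1), Z p ^ 2) := by
    rw [EuclideanSpace.norm_eq]; congr 1
    exact Finset.sum_congr rfl fun p _ => by simp [Real.norm_eq_abs, sq_abs]
  rw [h1]
  have h2 : (∑ p : Fin D × Fin (N+1), Z p ^ 2) = ∑ j : Fin (N+1), ‖matCol Z j‖ ^ 2 := by
    rw [Fintype.sum_prod_type_right]
    exact Finset.sum_congr rfl fun j _ => (norm_matCol_sq Z j).symm
  rw [h2]
  have h3 : (∑ j : Fin (N+1), ‖matCol Z j‖ ^ 2) ≤ ((N:ℝ)+1) * colNorm Z ^ 2 := by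
    calc (∑ j : Fin (N+1), ‖matCol Z j‖ ^ 2) ≤ ∑ _j : Fin (N+1), colNorm Z ^ 2 :=
          Finset.sum_le_sum fun j _ =>
            pow_le_pow_left₀ (norm_nonneg _) (norm_matCol_le_colNorm Z j) 2
      _ = ((N:ℝ)+1) * colNorm Z ^ 2 := by
          rw [Finset.sum_const, Finset.card_univ, Fintype.card_fin, nsmul_eq_mul]
          push_cast; ring
  calc Real.sqrt (∑ j : Fin (N+1), ‖matCol Z j‖ ^ 2) ≤ Real.sqrt (((N:ℝ)+1) * colNorm Z ^ 2) :=
        Real.sqrt_le_sqrt h3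
    _ = Real.sqrt ((N:ℝ)+1) * colNorm Z := by
        rw [Real.sqrt_mul (by positivity), Real.sqrt_sq (colNorm_nonneg Z)]

lemma colNorm_add_smul_sum_le {M : ℕ} (T : Mat D N) (c : ℝ) (hc : 0 ≤ c)
    (g : Fin M → Mat D N) :
    colNorm (T + c • ∑ j : Fin M, g j) ≤ colNorm T + c * ∑ j : Fin M, colNorm (g j) := by
  refine colNorm_le _ fun j => ?_
  rw [matCol_add, matCol_smul, matCol_sum]
  calc ‖matCol T j + c • ∑ i : Fin M, matCol (g i) j‖
      ≤ ‖matCol T j‖ + ‖c • ∑ i : Fin M, matCol (g i) j‖ := norm_add_le _ _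
    _ ≤ colNorm T + c * ∑ i : Fin M, colNorm (g i) := by
        rw [norm_smul, Real.norm_eq_abs, abs_of_nonneg hc]
        refine add_le_add (norm_matCol_le_colNorm T j) (mul_le_mul_of_nonneg_left ?_ hc)
        calc ‖∑ i : Fin M, matCol (g i) j‖ ≤ ∑ i : Fin M, ‖matCol (g i) j‖ :=
              norm_sum_le _ _
          _ ≤ ∑ i : Fin M, colNorm (g i) :=
              Finset.sum_le_sum fun i _ => norm_matCol_le_colNorm (g i) j

lemma half_step_bound {M : ℕ} (K c : ℝ) (hc : 0 ≤ c) (T : Mat D N)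
    (g : Fin M → Mat D N) (u : Fin M → ℝ)
    (hg : ∀ j, colNorm (g j) ≤ K * colNorm T * u j) :
    colNorm (T + c • ∑ j : Fin M, g j) ≤ colNorm T * Real.exp (K * c * ∑ j : Fin M, u j) := by
  have h0 := colNorm_nonneg T
  calc colNorm (T + c • ∑ j : Fin M, g j) ≤ colNorm T + c * ∑ j : Fin M, colNorm (g j) :=
        colNorm_add_smul_sum_le T c hc g
    _ ≤ colNorm T + c * (K * colNorm T * ∑ j : Fin M, u j) := by
        refine add_le_add_right (mul_le_mul_of_nonneg_left ?_ hc) _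
        rw [Finset.mul_sum]
        exact Finset.sum_le_sum fun j _ => hg j
    _ = colNorm T * (1 + K * c * ∑ j : Fin M, u j) := by ring
    _ ≤ colNorm T * Real.exp (K * c * ∑ j : Fin M, u j) := by
        refine mul_le_mul_of_nonneg_left ?_ h0
        linarith [Real.add_one_le_exp (K * c * ∑ j : Fin M, u j)]

lemma weight_sum_bound {q : ℕ} (L M : ℕ) (hL : 0 < L) (hM : 0 < M)
    (θ w : ℕ → Fin M → Par q) (A : ℝ) (hA : 0 ≤ A)
    (hparam : (1 / ((M : ℝ) * L)) *
        ∑ l ∈ Finset.range L, ∑ j : Fin M, (‖θ l j‖ ^ 2 + ‖w l j‖ ^ 2) ≤ A ^ 2) :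
    (2 * (L : ℝ) * M)⁻¹ * ∑ l ∈ Finset.range L, ∑ j : Fin M,
        ((1 + ‖θ l j‖ + ‖θ l j‖ ^ 2) + (1 + ‖w l j‖ + ‖w l j‖ ^ 2)) ≤ 1 + A + A ^ 2 := by
  classical
  set s : Finset (ℕ × Fin M) := Finset.range L ×ˢ (Finset.univ : Finset (Fin M)) with hs
  set F : ℕ × Fin M → ℝ := fun p => ‖θ p.1 p.2‖ + ‖w p.1 p.2‖ with hF
  set G : ℕ × Fin M → ℝ := fun p => ‖θ p.1 p.2‖ ^ 2 + ‖w p.1 p.2‖ ^ 2 with hG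
  have hcard : (s.card : ℝ) = (L : ℝ) * M := by
    simp [hs, Finset.card_product]
  have hLM : (0:ℝ) < (L:ℝ) * M := by positivity
  have hS2 : ∑ p ∈ s, G p ≤ (L : ℝ) * M * A ^ 2 := by
    have h1 : ∑ p ∈ s, G p = ∑ l ∈ Finset.range L, ∑ j : Fin M, (‖θ l j‖ ^ 2 + ‖w l j‖ ^ 2) := by
      rw [hs, Finset.sum_product]
    rw [h1]
    have := hparam
    rw [div_mul_eq_mul_div, one_mul, div_le_iff₀ (by positivity)] at this
    calc ∑ l ∈ Finset.range L, ∑ j : Fin M, (‖θ l j‖ ^ 2 + ‖w l j‖ ^ 2) ≤ A ^ 2 * ((M:ℝ) * L) :=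
          this
      _ = (L:ℝ) * M * A ^ 2 := by ring
  have hF0 : (0:ℝ) ≤ ∑ p ∈ s, F p := Finset.sum_nonneg fun p _ => by positivity
  have hCS : (∑ p ∈ s, F p) ^ 2 ≤ (s.card : ℝ) * ∑ p ∈ s, F p ^ 2 := by
    exact_mod_cast sq_sum_le_card_mul_sum_sq (s := s) (f := F)
  have hFG : ∑ p ∈ s, F p ^ 2 ≤ 2 * ∑ p ∈ s, G p := by
    rw [Finset.mul_sum]
    refine Finset.sum_le_sum fun p _ => ?_
    simp only [hF, hG]
    nlinarith [sq_nonneg (‖θ p.1 p.2‖ - ‖w p.1 p.2‖)]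
  have hS1 : ∑ p ∈ s, F p ≤ 2 * ((L:ℝ) * M) * A := by
    have h2 : (∑ p ∈ s, F p) ^ 2 ≤ (2 * ((L:ℝ) * M) * A) ^ 2 := by
      calc (∑ p ∈ s, F p) ^ 2 ≤ (s.card : ℝ) * ∑ p ∈ s, F p ^ 2 := hCS
        _ ≤ ((L:ℝ)*M) * (2 * ((L:ℝ)*M*A^2)) := by
            rw [hcard]
            exact mul_le_mul_of_nonneg_left (le_trans hFG (by linarith)) (le_of_lt hLM)
        _ ≤ (2 * ((L:ℝ) * M) * A) ^ 2 := by nlinarith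
    nlinarith [hF0, mul_nonneg (mul_nonneg (by norm_num : (0:ℝ) ≤ 2) hLM.le) hA]
  have hsum : ∑ l ∈ Finset.range L, ∑ j : Fin M,
      ((1 + ‖θ l j‖ + ‖θ l j‖ ^ 2) + (1 + ‖w l j‖ + ‖w l j‖ ^ 2))
      = 2 * ((L:ℝ) * M) + ∑ p ∈ s, F p + ∑ p ∈ s, G p := by
    rw [hs, ← Finset.sum_product']
    calc ∑ x ∈ s, ((1 + ‖θ x.1 x.2‖ + ‖θ x.1 x.2‖ ^ 2) + (1 + ‖w x.1 x.2‖ + ‖w x.1 x.2‖ ^ 2))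
        = ∑ x ∈ s, ((2:ℝ) + (F x + G x)) := Finset.sum_congr rfl fun x _ => by
          simp only [hF, hG]; ring
      _ = 2 * ((L:ℝ) * M) + ∑ p ∈ s, F p + ∑ p ∈ s, G p := by
          rw [Finset.sum_add_distrib, Finset.sum_add_distrib, Finset.sum_const,
            nsmul_eq_mul, hcard]
          ring
  rw [hsum, inv_mul_le_iff₀ (by positivity)]
  nlinarith [hS1, hS2, hLM, sq_nonneg A]

end Aux

/-- uniform bound on the discrete adjoint vectors. -/
theorem stmt11 (D N q : ℕ) (i₀ : Fin D) (f h : Mat D N → Par q → Mat D N)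
    (B K A yv : ℝ) (φT : ℝ → ℝ)
    (hB : 0 < B) (hK : 0 < K) (hA : 0 ≤ A)
    (hφT : Continuous φT ∧ Monotone φT)
    (hfdiffT : ∀ θ : Par q, Differentiable ℝ fun T : Mat D N => f T θ)
    (hhdiffT : ∀ w : Par q, Differentiable ℝ fun T : Mat D N => h T w)
    (hG1f : ∀ (T : Mat D N) (θ : Par q),
      colNorm (f T θ) ≤ K * colNorm T * (1 + ‖θ‖ + ‖θ‖ ^ 2))
    (hG3f : ∀ (T : Mat D N) (θ : Par q),
      ‖fderiv ℝ (fun T' => f T' θ) T‖ ≤ φT ‖T‖ * (1 + ‖θ‖ + ‖θ‖ ^ 2))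
    (hG1h : ∀ (T : Mat D N) (w : Par q),
      colNorm (h T w) ≤ K * colNorm T * (1 + ‖w‖ + ‖w‖ ^ 2))
    (hG3h : ∀ (T : Mat D N) (w : Par q),
      ‖fderiv ℝ (fun T' => h T' w) T‖ ≤ φT ‖T‖ * (1 + ‖w‖ + ‖w‖ ^ 2))
    (L M : ℕ) (hL : 0 < L) (hM : 0 < M)
    (θ w : ℕ → Fin M → Par q)
    (hparam : (1 / ((M : ℝ) * L)) *
        ∑ l ∈ Finset.range L, ∑ j : Fin M, (‖θ l j‖ ^ 2 + ‖w l j‖ ^ 2) ≤ A ^ 2)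
    (H : Mat D N) (hH : colNorm H ≤ B) (hy : |yv| ≤ B) :
    ∀ l < L,
      ‖phat f h i₀ yv L M θ w H l‖ ≤
        (B + B * Real.exp (K * (1 + A + A ^ 2))) *
          Real.exp (φT (Real.sqrt ((N : ℝ) + 1) * (B * Real.exp (K * (1 + A + A ^ 2)))) *
            (1 + A + A ^ 2)) := by
  intro l hlL
  classical
  set c : ℝ := (2 * (L:ℝ) * (M:ℝ))⁻¹ with hc_def
  have hc : 0 ≤ c := by rw [hc_def]; positivity
  set u : ℕ → Fin M → ℝ := fun m j => 1 + ‖θ m j‖ + ‖θ m j‖ ^ 2 with hu_def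
  set v : ℕ → Fin M → ℝ := fun m j => 1 + ‖w m j‖ + ‖w m j‖ ^ 2 with hv_def
  have hu : ∀ m j, 0 ≤ u m j := fun m j => by simp only [hu_def]; positivity
  have hv : ∀ m j, 0 ≤ v m j := fun m j => by simp only [hv_def]; positivity
  set S : ℕ → ℝ := fun n => ∑ m ∈ Finset.range n, ∑ j : Fin M, (u m j + v m j) with hS_def
  have hSterm : ∀ m, 0 ≤ ∑ j : Fin M, (u m j + v m j) :=
    fun m => Finset.sum_nonneg fun j _ => add_nonneg (hu m j) (hv m j)
  have hSmono : ∀ {a b : ℕ}, a ≤ b → S a ≤ S b := by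
    intro a b hab
    simp only [hS_def]
    exact Finset.sum_le_sum_of_subset_of_nonneg (Finset.range_subset_range.2 hab)
      (fun m _ _ => hSterm m)
  have hWS : c * S L ≤ 1 + A + A ^ 2 := by
    simp only [hS_def, hu_def, hv_def, hc_def]
    exact weight_sum_bound L M hL hM θ w A hA hparam
  set BT : ℝ := B * Real.exp (K * (1 + A + A ^ 2)) with hBT_def
  have hBTpos : 0 < BT := by rw [hBT_def]; positivity
  have hTsucc : ∀ n, Tdis f h L M θ w H (n+1) =
      TdisHalf f h L M θ w H n + c • ∑ j : Fin M, h (TdisHalf f h L M θ w H n) (w n j) :=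
    fun n => rfl
  have hTHeq : ∀ n, TdisHalf f h L M θ w H n =
      Tdis f h L M θ w H n + c • ∑ j : Fin M, f (Tdis f h L M θ w H n) (θ n j) :=
    fun n => rfl
  have hSucc : ∀ n, S (n+1) = S n + (∑ j : Fin M, u n j + ∑ j : Fin M, v n j) := by
    intro n
    simp only [hS_def, Finset.sum_range_succ, Finset.sum_add_distrib]
    ring
  have hTd : ∀ n, colNorm (Tdis f h L M θ w H n) ≤ B * Real.exp (K * (c * S n)) := by
    intro n
    induction n with
    | zero =>
        have e0 : Tdis f h L M θ w H 0 = H := rfl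
        have eS : S 0 = 0 := by simp [hS_def]
        rw [e0, eS]
        simpa using hH
    | succ n ih =>
        have hhalf : colNorm (TdisHalf f h L M θ w H n) ≤
            (B * Real.exp (K * (c * S n))) * Real.exp (K * c * ∑ j : Fin M, u n j) := by
          rw [hTHeq n]
          refine le_trans (half_step_bound K c hc _ _ (u n) fun j => ?_) ?_
          · simpa [hu_def] using hG1f (Tdis f h L M θ w H n) (θ n j)
          · exact mul_le_mul_of_nonneg_right ih (Real.exp_nonneg _)
        have hfull : colNorm (Tdis f h L M θ w H (n+1)) ≤
            ((B * Real.exp (K * (c * S n))) * Real.exp (K * c * ∑ j : Fin M, u n j)) *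
              Real.exp (K * c * ∑ j : Fin M, v n j) := by
          rw [hTsucc n]
          refine le_trans (half_step_bound K c hc _ _ (v n) fun j => ?_) ?_
          · simpa [hv_def] using hG1h (TdisHalf f h L M θ w H n) (w n j)
          · exact mul_le_mul_of_nonneg_right hhalf (Real.exp_nonneg _)
        refine le_trans hfull (le_of_eq ?_)
        rw [mul_assoc, mul_assoc, ← Real.exp_add, ← Real.exp_add, hSucc n]
        congr 2
        ring
  have hTH : ∀ n, colNorm (TdisHalf f h L M θ w H n) ≤
      (B * Real.exp (K * (c * S n))) * Real.exp (K * c * ∑ j : Fin M, u n j) := by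
    intro n
    rw [hTHeq n]
    refine le_trans (half_step_bound K c hc _ _ (u n) fun j => ?_) ?_
    · simpa [hu_def] using hG1f (Tdis f h L M θ w H n) (θ n j)
    · exact mul_le_mul_of_nonneg_right (hTd n) (Real.exp_nonneg _)
  have hcS : ∀ n, n ≤ L → c * S n ≤ 1 + A + A ^ 2 :=
    fun n hn => le_trans (mul_le_mul_of_nonneg_left (hSmono hn) hc) hWS
  have hTdBT : ∀ n, n ≤ L → colNorm (Tdis f h L M θ w H n) ≤ BT := by
    intro n hn
    refine le_trans (hTd n) ?_
    rw [hBT_def]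
    exact mul_le_mul_of_nonneg_left
      (Real.exp_le_exp.2 (mul_le_mul_of_nonneg_left (hcS n hn) hK.le)) hB.le
  have hTHBT : ∀ n, n < L → colNorm (TdisHalf f h L M θ w H n) ≤ BT := by
    intro n hn
    refine le_trans (hTH n) ?_
    rw [mul_assoc, ← Real.exp_add, hBT_def]
    refine mul_le_mul_of_nonneg_left (Real.exp_le_exp.2 ?_) hB.le
    have hvn : 0 ≤ ∑ j : Fin M, v n j := Finset.sum_nonneg fun j _ => hv n j
    have h1 : K * (c * S n) + K * c * ∑ j : Fin M, u n j ≤ K * (c * S (n+1)) := by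
      rw [hSucc n]
      nlinarith [mul_nonneg (mul_nonneg hK.le hc) hvn]
    exact le_trans h1 (mul_le_mul_of_nonneg_left (hcS (n+1) hn) hK.le)
  set φbar : ℝ := φT (Real.sqrt ((N:ℝ)+1) * BT) with hφ_def
  have hsqrtnn : 0 ≤ Real.sqrt ((N:ℝ)+1) := Real.sqrt_nonneg _
  have hBBT : B ≤ BT := by
    rw [hBT_def]
    exact le_mul_of_one_le_right hB.le
      (Real.one_le_exp (mul_nonneg hK.le (by positivity)))
  have hφ_of_T : ∀ (T : Mat D N), colNorm T ≤ BT → φT ‖T‖ ≤ φbar := by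
    intro T hT
    rw [hφ_def]
    exact hφT.2 (le_trans (frob_le_colNorm T) (mul_le_mul_of_nonneg_left hT hsqrtnn))
  have hφbar0 : 0 ≤ φbar := by
    have h2 := hG3f H 0
    have h4 : (1:ℝ) + ‖(0 : Par q)‖ + ‖(0 : Par q)‖ ^ 2 = 1 := by simp
    rw [h4, mul_one] at h2
    have h1 : 0 ≤ φT ‖H‖ := le_trans (norm_nonneg _) h2
    exact le_trans h1 (hφ_of_T H (le_trans hH hBBT))
  have hnorm1 : ‖(1 : Mat D N →L[ℝ] Mat D N)‖ ≤ 1 := by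
    rw [ContinuousLinearMap.one_def]; exact ContinuousLinearMap.norm_id_le
  have hAf : ∀ m, m ≤ L →
      ‖AfOp f h L M θ w H m‖ ≤ Real.exp (φbar * (c * ∑ j : Fin M, u m j)) := by
    intro m hm
    have hder : ∀ j : Fin M,
        ‖fderiv ℝ (fun T => f T (θ m j)) (Tdis f h L M θ w H m)‖ ≤ φbar * u m j := by
      intro j
      refine le_trans (hG3f _ (θ m j)) ?_
      simp only [hu_def]
      exact mul_le_mul_of_nonneg_right (hφ_of_T _ (hTdBT m hm)) (by positivity)
    have step : ‖AfOp f h L M θ w H m‖ ≤ 1 + c * (φbar * ∑ j : Fin M, u m j) := by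
      unfold AfOp
      rw [← hc_def]
      refine le_trans (norm_add_le _ _) (add_le_add hnorm1 ?_)
      refine le_trans (ContinuousLinearMap.opNorm_smul_le _ _) ?_
      rw [Real.norm_eq_abs, abs_of_nonneg hc]
      refine mul_le_mul_of_nonneg_left ?_ hc
      refine le_trans (norm_sum_le _ _) ?_
      rw [Finset.mul_sum]
      exact Finset.sum_le_sum fun j _ => hder j
    refine le_trans step ?_
    calc 1 + c * (φbar * ∑ j : Fin M, u m j)
        = φbar * (c * ∑ j : Fin M, u m j) + 1 := by ring
      _ ≤ Real.exp (φbar * (c * ∑ j : Fin M, u m j)) := Real.add_one_le_exp _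
  have hAh : ∀ m, m < L →
      ‖AhOp f h L M θ w H m‖ ≤ Real.exp (φbar * (c * ∑ j : Fin M, v m j)) := by
    intro m hm
    have hder : ∀ j : Fin M,
        ‖fderiv ℝ (fun T => h T (w m j)) (TdisHalf f h L M θ w H m)‖ ≤ φbar * v m j := by
      intro j
      refine le_trans (hG3h _ (w m j)) ?_
      simp only [hv_def]
      exact mul_le_mul_of_nonneg_right (hφ_of_T _ (hTHBT m hm)) (by positivity)
    have step : ‖AhOp f h L M θ w H m‖ ≤ 1 + c * (φbar * ∑ j : Fin M, v m j) := by
      unfold AhOp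
      rw [← hc_def]
      refine le_trans (norm_add_le _ _) (add_le_add hnorm1 ?_)
      refine le_trans (ContinuousLinearMap.opNorm_smul_le _ _) ?_
      rw [Real.norm_eq_abs, abs_of_nonneg hc]
      refine mul_le_mul_of_nonneg_left ?_ hc
      refine le_trans (norm_sum_le _ _) ?_
      rw [Finset.mul_sum]
      exact Finset.sum_le_sum fun j _ => hder j
    refine le_trans step ?_
    calc 1 + c * (φbar * ∑ j : Fin M, v m j)
        = φbar * (c * ∑ j : Fin M, v m j) + 1 := by ring
      _ ≤ Real.exp (φbar * (c * ∑ j : Fin M, v m j)) := Real.add_one_le_exp _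
  have hBP : ‖backProd f h L M θ w H l‖ ≤ Real.exp (φbar * (1 + A + A ^ 2)) := by
    have hpos : 0 < L - l := Nat.sub_pos_of_lt hlL
    set g : Fin (L - l) → (Mat D N →L[ℝ] Mat D N) := fun m =>
      AhOp f h L M θ w H (L - 1 - (m : ℕ)) * AfOp f h L M θ w H (L - 1 - (m : ℕ)) with hg_def
    have hne : List.ofFn g ≠ [] := by
      intro hcon
      have := congrArg List.length hcon
      simp at this
      omega
    have h1 : ‖backProd f h L M θ w H l‖ ≤ ∏ m : Fin (L - l), ‖g m‖ := by
      unfold backProd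
      refine le_trans (List.norm_prod_le' hne) (le_of_eq ?_)
      rw [List.map_ofFn, List.prod_ofFn]
      rfl
    set t : ℕ → ℝ := fun m => φbar * (c * ∑ j : Fin M, (u m j + v m j)) with ht_def
    have ht0 : ∀ m, 0 ≤ t m := fun m =>
      mul_nonneg hφbar0 (mul_nonneg hc (hSterm m))
    have h2 : ∀ m : Fin (L - l), ‖g m‖ ≤ Real.exp (t (L - 1 - (m:ℕ))) := by
      intro m
      have hmlt : L - 1 - (m:ℕ) < L := by omega
      refine le_trans (norm_mul_le _ _) ?_
      refine le_trans (mul_le_mul (hAh _ hmlt) (hAf _ hmlt.le) (norm_nonneg _)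
        (Real.exp_nonneg _)) ?_
      rw [← Real.exp_add]
      refine le_of_eq ?_
      simp only [ht_def, Finset.sum_add_distrib]
      ring
    have h3 : (∏ m : Fin (L - l), ‖g m‖) ≤
        Real.exp (∑ m : Fin (L - l), t (L - 1 - (m:ℕ))) := by
      rw [Real.exp_sum]
      exact Finset.prod_le_prod (fun m _ => norm_nonneg _) (fun m _ => h2 m)
    have h4 : (∑ m : Fin (L - l), t (L - 1 - (m:ℕ))) ≤ ∑ m ∈ Finset.range L, t m := by
      rw [← Finset.sum_range (fun m => t (L - 1 - m))]
      have hinj : ∀ a ∈ Finset.range (L - l), ∀ b ∈ Finset.range (L - l),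
          L - 1 - a = L - 1 - b → a = b := by
        intro a ha b hb hab
        simp only [Finset.mem_range] at ha hb
        omega
      rw [show (∑ m ∈ Finset.range (L-l), t (L-1-m))
          = ∑ m ∈ (Finset.range (L-l)).image (fun m => L-1-m), t m from
        (Finset.sum_image hinj).symm]
      refine Finset.sum_le_sum_of_subset_of_nonneg ?_ (fun m _ _ => ht0 m)
      intro m hm
      simp only [Finset.mem_image, Finset.mem_range] at hm ⊢
      obtain ⟨a, ha, rfl⟩ := hm
      omega
    have h5 : (∑ m ∈ Finset.range L, t m) = φbar * (c * S L) := by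
      simp only [ht_def, hS_def, Finset.mul_sum]
    refine le_trans h1 (le_trans h3 (le_trans (Real.exp_le_exp.2 (le_trans h4 (le_of_eq h5))) ?_))
    exact Real.exp_le_exp.2 (mul_le_mul_of_nonneg_left hWS hφbar0)
  have hrabs : |Tdis f h L M θ w H L (i₀, Fin.last N) - yv| ≤ B + BT := by
    calc |Tdis f h L M θ w H L (i₀, Fin.last N) - yv|
        ≤ |Tdis f h L M θ w H L (i₀, Fin.last N)| + |yv| := abs_sub _ _
      _ ≤ BT + B := add_le_add
          (le_trans (abs_entry_le_colNorm _ i₀ (Fin.last N)) (hTdBT L le_rfl)) hy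
      _ = B + BT := by ring
  have hpe : ‖ContinuousLinearMap.adjoint (backProd f h L M θ w H l)
      (EuclideanSpace.single (i₀, Fin.last N) (1:ℝ))‖ ≤ Real.exp (φbar * (1 + A + A ^ 2)) := by
    refine le_trans (ContinuousLinearMap.le_opNorm _ _) ?_
    rw [ContinuousLinearMap.adjoint.norm_map, EuclideanSpace.norm_single, norm_one, mul_one]
    exact hBP
  have heq : ‖phat f h i₀ yv L M θ w H l‖ =
      |Tdis f h L M θ w H L (i₀, Fin.last N) - yv| *
        ‖ContinuousLinearMap.adjoint (backProd f h L M θ w H l)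
          (EuclideanSpace.single (i₀, Fin.last N) (1:ℝ))‖ := by
    unfold phat
    rw [norm_smul, Real.norm_eq_abs]
  rw [heq]
  exact mul_le_mul hrabs hpe (norm_nonneg _) (by positivity)
end
end
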